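/- arXiv:2012.05838 — 3 statements merged into one kernel-verified Lean document; each statement's English description precedes it below -/
import Mathlib

section
/- Let k be a field and let P = k[x₁, x₂, y, u] be the polynomial ring graded by weighted degree with weights w(x₁) = w(x₂) = 1, w(y) = 2, w(u) = 3. Then for every natural number m, the Hilbert function of the quotient ring P/(x₁³ − x₂y) at degree m, i.e., the k-dimension of the image of the space of weighted-homogeneous polynomials of weighted degree m under the quotient map, equals (⌊m/2⌋ + 1) · (⌊(m+1)/2⌋ + 1). -/
namespace HilbAux

open MvPolynomial DirectSum

noncomputable section


/-! ### Counting lemmas -/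

/-- Solutions of `a + b = m`. -/
abbrev A2 (m : ℕ) : Type := {p : ℕ × ℕ // p.1 + p.2 = m}
/-- Solutions of `a + b + 2c = m`. -/
abbrev A3 (m : ℕ) : Type := {p : ℕ × ℕ × ℕ // p.1 + p.2.1 + 2 * p.2.2 = m}
/-- Solutions of `a + b + 2c + 3d = m`. -/
abbrev A4 (m : ℕ) : Type :=
  {p : ℕ × ℕ × ℕ × ℕ // p.1 + p.2.1 + 2 * p.2.2.1 + 3 * p.2.2.2 = m}

def A2equiv (m : ℕ) : A2 m ≃ Fin (m + 1) where
  toFun := fun ⟨⟨a, b⟩, h⟩ => ⟨a, by dsimp only at h; omega⟩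
  invFun i := ⟨(i.1, m - i.1), by have := i.2; dsimp only; omega⟩
  left_inv := fun ⟨⟨a, b⟩, h⟩ => Subtype.ext (by dsimp only at h ⊢; congr 1; omega)
  right_inv i := rfl

instance (m : ℕ) : Finite (A2 m) := Finite.of_equiv _ (A2equiv m).symm

lemma card_A2 (m : ℕ) : Nat.card (A2 m) = m + 1 := by
  rw [Nat.card_congr (A2equiv m), Nat.card_eq_fintype_card, Fintype.card_fin]

instance (m : ℕ) : Finite (A3 m) := by
  apply Finite.of_injective (β := Fin (m+1) × Fin (m+1) × Fin (m+1))
    (fun ⟨⟨a, b, c⟩, h⟩ => (⟨a, by dsimp only at h; omega⟩, ⟨b, by dsimp only at h; omega⟩,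
      ⟨c, by dsimp only at h; omega⟩))
  rintro ⟨⟨a, b, c⟩, h⟩ ⟨⟨a', b', c'⟩, h'⟩ he
  simp only [Prod.mk.injEq, Fin.mk.injEq] at he
  exact Subtype.ext (by simp [he.1, he.2.1, he.2.2])

instance (m : ℕ) : Finite (A4 m) := by
  apply Finite.of_injective (β := Fin (m+1) × Fin (m+1) × Fin (m+1) × Fin (m+1))
    (fun ⟨⟨a, b, c, d⟩, h⟩ => (⟨a, by dsimp only at h; omega⟩, ⟨b, by dsimp only at h; omega⟩,
      ⟨c, by dsimp only at h; omega⟩, ⟨d, by dsimp only at h; omega⟩))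
  rintro ⟨⟨a, b, c, d⟩, h⟩ ⟨⟨a', b', c', d'⟩, h'⟩ he
  simp only [Prod.mk.injEq, Fin.mk.injEq] at he
  exact Subtype.ext (by simp [he.1, he.2.1, he.2.2.1, he.2.2.2])

noncomputable def A3split (m : ℕ) (hm : 2 ≤ m) : A2 m ⊕ A3 (m - 2) ≃ A3 m := by
  apply Equiv.ofBijective
    (Sum.elim
      (fun p => (⟨(p.1.1, p.1.2, 0),
        by obtain ⟨⟨a, b⟩, h⟩ := p; dsimp only at h ⊢; omega⟩ : A3 m))
      (fun p => ⟨(p.1.1, p.1.2.1, p.1.2.2 + 1),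
        by obtain ⟨⟨a, b, c⟩, h⟩ := p; dsimp only at h ⊢; omega⟩))
  constructor
  · rintro (⟨⟨a, b⟩, h⟩ | ⟨⟨a, b, c⟩, h⟩) (⟨⟨a', b'⟩, h'⟩ | ⟨⟨a', b', c'⟩, h'⟩) he <;>
      simp only [Sum.elim_inl, Sum.elim_inr, Subtype.mk.injEq, Prod.mk.injEq] at he <;>
      [skip; exact absurd he (by omega); exact absurd he (by omega); skip] <;>
      · congr 1
        exact Subtype.ext (by dsimp only at h h' ⊢; simp only [Prod.mk.injEq]; omega)
  · rintro ⟨⟨a, b, c⟩, h⟩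
    dsimp only at h
    rcases c with _ | c
    · exact ⟨Sum.inl ⟨(a, b), by dsimp only; omega⟩, Subtype.ext rfl⟩
    · exact ⟨Sum.inr ⟨(a, b, c), by dsimp only; omega⟩, Subtype.ext rfl⟩

lemma card_A3_small (m : ℕ) (hm : m < 2) : Nat.card (A3 m) = m + 1 := by
  rw [← card_A2 m]
  apply Nat.card_congr
  apply Equiv.ofBijective
    (fun p => (⟨(p.1.1, p.1.2.1),
      by obtain ⟨⟨a, b, c⟩, h⟩ := p; dsimp only at h ⊢; omega⟩ : A2 m))
  constructor
  · rintro ⟨⟨a, b, c⟩, h⟩ ⟨⟨a', b', c'⟩, h'⟩ he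
    simp only [Subtype.mk.injEq, Prod.mk.injEq] at he
    dsimp only at h h'
    exact Subtype.ext (by simp only [Prod.mk.injEq]; omega)
  · rintro ⟨⟨a, b⟩, h⟩
    dsimp only at h
    exact ⟨⟨(a, b, 0), by dsimp only; omega⟩, Subtype.ext rfl⟩

lemma card_A3 (m : ℕ) : Nat.card (A3 m) = (m / 2 + 1) * ((m + 1) / 2 + 1) := by
  induction m using Nat.strong_induction_on with
  | _ m ih =>
    rcases lt_or_ge m 2 with hm | hm
    · interval_cases m <;> simp [card_A3_small]
    · rw [← Nat.card_congr (A3split m hm), Nat.card_sum, card_A2,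
        ih (m - 2) (by omega)]
      rcases Nat.even_or_odd m with ⟨a, ha⟩ | ⟨a, ha⟩
      · subst ha
        have h1 : (a + a - 2) / 2 = a - 1 := by omega
        have h2 : (a + a - 2 + 1) / 2 = a - 1 := by omega
        have h3 : (a + a) / 2 = a := by omega
        have h4 : (a + a + 1) / 2 = a := by omega
        rw [h1, h2, h3, h4]
        have ha1 : 1 ≤ a := by omega
        obtain ⟨a, rfl⟩ := Nat.exists_eq_add_of_le ha1
        simp only [Nat.add_sub_cancel_left, Nat.add_sub_cancel]
        ring_nf
      · subst ha
        have h1 : (2 * a + 1 - 2) / 2 = a - 1 := by omega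
        have h2 : (2 * a + 1 - 2 + 1) / 2 = a := by omega
        have h3 : (2 * a + 1) / 2 = a := by omega
        have h4 : (2 * a + 1 + 1) / 2 = a + 1 := by omega
        rw [h1, h2, h3, h4]
        have ha1 : 1 ≤ a := by omega
        obtain ⟨a, rfl⟩ := Nat.exists_eq_add_of_le ha1
        simp only [Nat.add_sub_cancel_left, Nat.add_sub_cancel]
        ring_nf

noncomputable def A4split (m : ℕ) (hm : 3 ≤ m) : A3 m ⊕ A4 (m - 3) ≃ A4 m := by
  apply Equiv.ofBijective
    (Sum.elim
      (fun p => (⟨(p.1.1, p.1.2.1, p.1.2.2, 0),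
        by obtain ⟨⟨a, b, c⟩, h⟩ := p; dsimp only at h ⊢; omega⟩ : A4 m))
      (fun p => ⟨(p.1.1, p.1.2.1, p.1.2.2.1, p.1.2.2.2 + 1),
        by obtain ⟨⟨a, b, c, d⟩, h⟩ := p; dsimp only at h ⊢; omega⟩))
  constructor
  · rintro (⟨⟨a, b, c⟩, h⟩ | ⟨⟨a, b, c, d⟩, h⟩) (⟨⟨a', b', c'⟩, h'⟩ | ⟨⟨a', b', c', d'⟩, h'⟩) he <;>
      simp only [Sum.elim_inl, Sum.elim_inr, Subtype.mk.injEq, Prod.mk.injEq] at he <;>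
      [skip; exact absurd he (by omega); exact absurd he (by omega); skip] <;>
      · congr 1
        exact Subtype.ext (by dsimp only at h h' ⊢; simp only [Prod.mk.injEq]; omega)
  · rintro ⟨⟨a, b, c, d⟩, h⟩
    dsimp only at h
    rcases d with _ | d
    · exact ⟨Sum.inl ⟨(a, b, c), by dsimp only; omega⟩, Subtype.ext rfl⟩
    · exact ⟨Sum.inr ⟨(a, b, c, d), by dsimp only; omega⟩, Subtype.ext rfl⟩

lemma card_A4 (m : ℕ) (hm : 3 ≤ m) :
    Nat.card (A4 m) = Nat.card (A3 m) + Nat.card (A4 (m - 3)) := by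
  rw [← Nat.card_congr (A4split m hm), Nat.card_sum]

lemma card_A4_small (m : ℕ) (hm : m < 3) : Nat.card (A4 m) = Nat.card (A3 m) := by
  apply Nat.card_congr
  apply Equiv.ofBijective
    (fun p => (⟨(p.1.1, p.1.2.1, p.1.2.2.1),
      by obtain ⟨⟨a, b, c, d⟩, h⟩ := p; dsimp only at h ⊢; omega⟩ : A3 m))
  constructor
  · rintro ⟨⟨a, b, c, d⟩, h⟩ ⟨⟨a', b', c', d'⟩, h'⟩ he
    simp only [Subtype.mk.injEq, Prod.mk.injEq] at he
    dsimp only at h h'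
    exact Subtype.ext (by simp only [Prod.mk.injEq]; omega)
  · rintro ⟨⟨a, b, c⟩, h⟩
    dsimp only at h
    exact ⟨⟨(a, b, c, 0), by dsimp only; omega⟩, Subtype.ext rfl⟩


abbrev ww : Fin 4 → ℕ := ![1, 1, 2, 3]

lemma weight_eq (d : Fin 4 →₀ ℕ) :
    (Finsupp.weight ww) d = d 0 + d 1 + 2 * d 2 + 3 * d 3 := by
  rw [Finsupp.weight_apply, Finsupp.sum_fintype _ _ (fun i => by rw [zero_smul])]
  rw [Fin.sum_univ_four]
  have h0 : ww 0 = 1 := rfl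
  have h1 : ww 1 = 1 := rfl
  have h2 : ww 2 = 2 := rfl
  have h3 : ww 3 = 3 := rfl
  rw [h0, h1, h2, h3]
  simp only [smul_eq_mul]
  ring

variable (k : Type*) [Field k]

def f : MvPolynomial (Fin 4) k := X 0 ^ 3 - X 1 * X 2

lemma f_mem : f k ∈ weightedHomogeneousSubmodule k ww 3 := by
  apply sub_mem
  · rw [mem_weightedHomogeneousSubmodule]
    rw [X_pow_eq_monomial]
    exact isWeightedHomogeneous_monomial _ _ _ (by rw [weight_eq]; simp)
  · rw [mem_weightedHomogeneousSubmodule]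
    have := (isWeightedHomogeneous_X k ww 1).mul (isWeightedHomogeneous_X k ww 2)
    convert this using 2
    rfl
lemma f_ne_zero : f k ≠ 0 := by
  intro h
  have := congrArg (eval (fun i : Fin 4 => if i = 0 then (1 : k) else 0)) h
  simp [f] at this

def mk4 (a b c d : ℕ) : Fin 4 →₀ ℕ := Finsupp.equivFunOnFinite.symm ![a, b, c, d]

lemma mk4_0 (a b c d : ℕ) : mk4 a b c d 0 = a := rfl
lemma mk4_1 (a b c d : ℕ) : mk4 a b c d 1 = b := rfl
lemma mk4_2 (a b c d : ℕ) : mk4 a b c d 2 = c := rfl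
lemma mk4_3 (a b c d : ℕ) : mk4 a b c d 3 = d := rfl

def E (n : ℕ) : {d : Fin 4 →₀ ℕ // (Finsupp.weight ww) d = n} ≃ A4 n where
  toFun d := ⟨(d.1 0, d.1 1, d.1 2, d.1 3), by
    have := d.2; rw [weight_eq] at this; dsimp only; omega⟩
  invFun p := ⟨mk4 p.1.1 p.1.2.1 p.1.2.2.1 p.1.2.2.2, by
    have := p.2
    rw [weight_eq, mk4_0, mk4_1, mk4_2, mk4_3]
    omega⟩
  left_inv d := Subtype.ext (by ext i; fin_cases i <;> rfl)
  right_inv p := rfl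

instance (n : ℕ) : Finite {d : Fin 4 →₀ ℕ // (Finsupp.weight ww) d = n} :=
  Finite.of_equiv _ (E n).symm

noncomputable def WEquiv (n : ℕ) :
    (weightedHomogeneousSubmodule k ww n) ≃ₗ[k]
      ({d : Fin 4 →₀ ℕ | (Finsupp.weight ww) d = n} → k) :=
  haveI : Finite ↥{d : Fin 4 →₀ ℕ | (Finsupp.weight ww) d = n} :=
    Finite.of_equiv _ (E n).symm
  (LinearEquiv.ofEq _ _ (weightedHomogeneousSubmodule_eq_finsupp_supported k ww n)).trans
    ((AddMonoidAlgebra.supportedEquivFinsupp _).trans (Finsupp.linearEquivFunOnFinite k k _))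

lemma fd (n : ℕ) : FiniteDimensional k (weightedHomogeneousSubmodule k ww n) := by
  haveI : Finite ↥{d : Fin 4 →₀ ℕ | (Finsupp.weight ww) d = n} :=
    Finite.of_equiv _ (E n).symm
  haveI : Fintype ↥{d : Fin 4 →₀ ℕ | (Finsupp.weight ww) d = n} := Fintype.ofFinite _
  exact Module.Finite.equiv (WEquiv k n).symm

lemma finrank_W (n : ℕ) :
    Module.finrank k (weightedHomogeneousSubmodule k ww n) = Nat.card (A4 n) := by
  haveI : Finite ↥{d : Fin 4 →₀ ℕ | (Finsupp.weight ww) d = n} :=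
    Finite.of_equiv _ (E n).symm
  haveI : Fintype ↥{d : Fin 4 →₀ ℕ | (Finsupp.weight ww) d = n} := Fintype.ofFinite _
  rw [(WEquiv k n).finrank_eq, Module.finrank_pi, ← Nat.card_eq_fintype_card]
  exact Nat.card_congr (E n)

/-- Multiplication by `f` as a linear map between homogeneous components. -/
def psi (m : ℕ) (hm : 3 ≤ m) :
    weightedHomogeneousSubmodule k ww (m - 3) →ₗ[k] weightedHomogeneousSubmodule k ww m where
  toFun q := ⟨f k * q.1, by
    rw [mem_weightedHomogeneousSubmodule]
    have hf : IsWeightedHomogeneous ww (f k) 3 := f_mem k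
    have hq : IsWeightedHomogeneous ww (q : MvPolynomial (Fin 4) k) (m - 3) := q.2
    have := hf.mul hq
    rwa [show 3 + (m - 3) = m by omega] at this⟩
  map_add' a b := Subtype.ext (by
    simp only [Submodule.coe_add]
    exact mul_add _ _ _)
  map_smul' c a := Subtype.ext (by
    simp only [SetLike.val_smul, RingHom.id_apply]
    exact mul_smul_comm _ _ _)

lemma psi_inj (m : ℕ) (hm : 3 ≤ m) : Function.Injective (psi k m hm) := by
  intro a b h
  have : f k * a.1 = f k * b.1 := congrArg Subtype.val h
  exact Subtype.ext (mul_left_cancel₀ (f_ne_zero k) this)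

end
end HilbAux

open MvPolynomial DirectSum HilbAux

/-- Let `k` be a field and `P = k[x₁, x₂, y, u]` graded with weights `(1,1,2,3)`.
Then the Hilbert function of `P/(x₁³ - x₂y)` at degree `m`, i.e. the `k`-dimension of the
image of the weighted-homogeneous degree-`m` component of `P` under the quotient map, equals
`(⌊m/2⌋ + 1) * (⌊(m+1)/2⌋ + 1)`. -/
theorem hilbert_function_index_three_subring (k : Type*) [Field k] (m : ℕ) :
    Module.finrank k
      (Submodule.map
        (Ideal.Quotient.mkₐ k (Ideal.span
          {(MvPolynomial.X 0 ^ 3 - MvPolynomial.X 1 * MvPolynomial.X 2 :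
            MvPolynomial (Fin 4) k)})).toLinearMap
        (MvPolynomial.weightedHomogeneousSubmodule k (![1, 1, 2, 3] : Fin 4 → ℕ) m)) =
      (m / 2 + 1) * ((m + 1) / 2 + 1) := by
  classical
  letI : GradedAlgebra (weightedHomogeneousSubmodule k ww) := weightedGradedAlgebra k ww
  haveI := fd k m
  set I : Ideal (MvPolynomial (Fin 4) k) := Ideal.span {f k} with hI
  show Module.finrank k
      (Submodule.map (Ideal.Quotient.mkₐ k I).toLinearMap
        (weightedHomogeneousSubmodule k ww m)) = (m / 2 + 1) * ((m + 1) / 2 + 1)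
  set W := weightedHomogeneousSubmodule k ww m with hW
  set φ := (Ideal.Quotient.mkₐ k I).toLinearMap ∘ₗ W.subtype with hφ
  have hmap : Submodule.map (Ideal.Quotient.mkₐ k I).toLinearMap W = LinearMap.range φ := by
    rw [hφ, LinearMap.range_comp, Submodule.range_subtype]
  rw [hmap]
  have hker : ∀ x : W, (φ x = 0 ↔ f k ∣ (x : MvPolynomial (Fin 4) k)) := by
    intro x
    show Ideal.Quotient.mkₐ k I (x : MvPolynomial (Fin 4) k) = 0 ↔ _
    rw [Ideal.Quotient.mkₐ_eq_mk, Ideal.Quotient.eq_zero_iff_mem, hI, Ideal.mem_span_singleton]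
  have hrank := LinearMap.finrank_range_add_finrank_ker φ
  rcases le_or_gt 3 m with hm | hm
  · have hkereq : LinearMap.ker φ = LinearMap.range (psi k m hm) := by
      ext x
      rw [LinearMap.mem_ker, hker x, LinearMap.mem_range]
      constructor
      · rintro ⟨q, hq⟩
        refine ⟨⟨(decompose (weightedHomogeneousSubmodule k ww) q (m - 3) :
          MvPolynomial (Fin 4) k), SetLike.coe_mem _⟩, ?_⟩
        apply Subtype.ext
        show f k * _ = (x : MvPolynomial (Fin 4) k)
        calc f k * (decompose (weightedHomogeneousSubmodule k ww) q (m - 3) :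
              MvPolynomial (Fin 4) k)
            = (decompose (weightedHomogeneousSubmodule k ww) (f k * q) m :
              MvPolynomial (Fin 4) k) :=
              (DirectSum.coe_decompose_mul_of_left_mem_of_le (weightedHomogeneousSubmodule k ww) (f_mem k) hm).symm
          _ = (decompose (weightedHomogeneousSubmodule k ww) (x : MvPolynomial (Fin 4) k) m :
              MvPolynomial (Fin 4) k) := by rw [← hq]
          _ = (x : MvPolynomial (Fin 4) k) := DirectSum.decompose_of_mem_same _ x.2
      · rintro ⟨q, rfl⟩
        exact Dvd.intro _ rfl
    have h2 : Module.finrank k (LinearMap.ker φ) = Nat.card (A4 (m - 3)) := by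
      rw [hkereq, LinearMap.finrank_range_of_inj (psi_inj k m hm), finrank_W]
    have h3 : Module.finrank k W = Nat.card (A4 m) := finrank_W k m
    have key : Module.finrank k (LinearMap.range φ) = Nat.card (A3 m) := by
      have h4 := card_A4 m hm
      omega
    rw [key, card_A3]
  · have hkereq : LinearMap.ker φ = ⊥ := by
      rw [eq_bot_iff]
      rintro x hx
      rw [LinearMap.mem_ker, hker x] at hx
      obtain ⟨q, hq⟩ := hx
      have hx0 : (x : MvPolynomial (Fin 4) k) = 0 := by
        rw [← DirectSum.decompose_of_mem_same (weightedHomogeneousSubmodule k ww) x.2, hq]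
        rw [DirectSum.coe_decompose_mul_of_left_mem_of_not_le (weightedHomogeneousSubmodule k ww) (f_mem k) (show ¬ (3:ℕ) ≤ m by omega)]
      exact Subtype.ext hx0
    have h2 : Module.finrank k (LinearMap.ker φ) = 0 := by
      rw [hkereq]
      exact finrank_bot k _
    rw [h2, Nat.add_zero] at hrank
    rw [hrank, finrank_W, card_A4_small m hm, card_A3]
end

section
/- Let M be the 3×3 rational matrix with rows (−4, 1, 0), (1, −3, 1), (0, 1, −2), and let Δ = (2/3, 2/3, 1/3) ∈ ℚ³. Then for every natural number m, the quantity {mΔ}ᵀ · M · ({mΔ} − {Δ}) equals 0, where {w} denotes the componentwise fractional part of a vector w ∈ ℚ³. -/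
/-- The componentwise fractional part of a vector in `ℚ³`. -/
def fracVec (v : Fin 3 → ℚ) : Fin 3 → ℚ := fun i => Int.fract (v i)

lemma fract_mod3 (m k : ℕ) :
    Int.fract ((m : ℚ) * ((k : ℚ) / 3)) = Int.fract (((m % 3 : ℕ) : ℚ) * ((k : ℚ) / 3)) := by
  conv_lhs => rw [← Nat.mod_add_div m 3]
  have : (((m % 3 + 3 * (m / 3) : ℕ) : ℚ)) * ((k : ℚ) / 3)
      = ((m % 3 : ℕ) : ℚ) * ((k : ℚ) / 3) + ((m / 3 * k : ℕ) : ℚ) := by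
    push_cast; ring
  rw [this, Int.fract_add_natCast]

lemma fract_third : Int.fract ((1:ℚ)/3) = 1/3 := Int.fract_eq_self.2 (by norm_num)
lemma fract_two_third : Int.fract ((2:ℚ)/3) = 2/3 := Int.fract_eq_self.2 (by norm_num)
lemma fract_four_third : Int.fract ((4:ℚ)/3) = 1/3 := by
  have : (4:ℚ)/3 = 1/3 + (1 : ℤ) := by norm_num
  rw [this, Int.fract_add_intCast, fract_third]

/-- For the intersection matrix `M` of the T-string `[4, 3, 2]` and
`Δ = (2/3, 2/3, 1/3)`, the correction term `{mΔ}ᵀ · M · ({mΔ} - {Δ})` in Blache's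
plurigenus formula vanishes for every natural number `m`. -/
theorem correction_term_vanishes_18_5 (m : ℕ) :
    dotProduct (fracVec ((m : ℚ) • ![2 / 3, 2 / 3, 1 / 3]))
      ((!![(-4 : ℚ), 1, 0; 1, -3, 1; 0, 1, -2]).mulVec
        (fracVec ((m : ℚ) • ![2 / 3, 2 / 3, 1 / 3]) - fracVec ![2 / 3, 2 / 3, 1 / 3])) = 0 := by
  have h1 := fract_mod3 m 2
  have h2 := fract_mod3 m 1
  have hf : fracVec ((m : ℚ) • ![2 / 3, 2 / 3, 1 / 3])
      = fracVec (((m % 3 : ℕ) : ℚ) • ![2 / 3, 2 / 3, 1 / 3]) := by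
    funext i
    fin_cases i <;> simp only [fracVec, Matrix.smul_cons, smul_eq_mul,
      Matrix.cons_val_zero, Matrix.cons_val_one, Matrix.head_cons,
      Matrix.cons_val_two, Matrix.tail_cons] <;>
      [simpa using h1; simpa using h1; simpa using h2]
  rw [hf]
  have : m % 3 < 3 := Nat.mod_lt _ (by norm_num)
  interval_cases h : m % 3 <;>
    · simp only [Nat.cast_ofNat, Nat.cast_zero, Nat.cast_one, zero_smul, one_smul,
        Matrix.smul_cons, smul_eq_mul, Matrix.smul_empty]
      norm_num [fracVec, dotProduct, Matrix.mulVec, Fin.sum_univ_three,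
        Matrix.vecHead, Matrix.vecTail, Function.comp, fract_third, fract_two_third,
        fract_four_third, Int.fract_zero, Matrix.cons_val_zero, Matrix.cons_val_one,
        Matrix.cons_val_two, Matrix.head_cons, Matrix.tail_cons,
        show (2:ℚ) * (2/3) = 4/3 by norm_num, show (2:ℚ) * (1/3) = 2/3 by norm_num]
end

section
/- Let r ≥ 1 and let b₁, …, b_r be integers with bᵢ ≥ 2 for all i, and let d be a positive integer. If the Hirzebruch–Jung continued fraction value v([b₁, …, b_r]) equals 4d/(2d − 1), then the list [b₁, …, b_r] equals S_d, where S₁ = [4] and, for d ≥ 2, S_d = [3, 2, …, 2, 3] with d − 2 middle entries equal to 2. In particular r = max(d, 1) = d when d ≥ 2 and r = 1 when d = 1. -/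
def hjValue : List ℚ → ℚ
  | [] => 0
  | [b] => b
  | b :: l => b - 1 / hjValue l

def indexTwoTStringZ (d : ℕ) : List ℤ :=
  if d = 1 then [4] else 3 :: (List.replicate (d - 2) 2 ++ [3])

lemma hjValue_cons_cons (b c : ℚ) (l : List ℚ) :
    hjValue (b :: c :: l) = b - 1 / hjValue (c :: l) := rfl

lemma map_cast_cons (b : ℤ) (l : List ℤ) :
    (b :: l).map (fun x => (x:ℚ)) = (b:ℚ) :: l.map (fun x => (x:ℚ)) := rfl

lemma hjValue_cons_tail (b : ℤ) (c : ℤ) (l : List ℤ) :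
    hjValue ((b :: c :: l).map (fun x => (x:ℚ))) =
      (b:ℚ) - 1 / hjValue ((c :: l).map (fun x => (x:ℚ))) := rfl

lemma hjValue_singleton (b : ℤ) :
    hjValue ([b].map (fun x => (x:ℚ))) = (b:ℚ) := rfl

lemma hj_gt_one : ∀ l : List ℤ, l ≠ [] → (∀ b ∈ l, (2:ℤ) ≤ b) →
    1 < hjValue (l.map (fun b => (b : ℚ)))
  | [], h, _ => absurd rfl h
  | [b], _, hb => by
      rw [hjValue_singleton]
      have : (2:ℤ) ≤ b := hb b (by simp)
      have : (2:ℚ) ≤ (b:ℚ) := by exact_mod_cast this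
      linarith
  | b :: c :: l, _, hb => by
      have ht := hj_gt_one (c :: l) (by simp)
        (fun x hx => hb x (by simp only [List.mem_cons] at hx ⊢; tauto))
      rw [hjValue_cons_tail]
      have h1 : 1 / hjValue ((c :: l).map (fun x => (x:ℚ))) < 1 := by
        rw [div_lt_one (by linarith)]; linarith
      have hb2 : (2:ℚ) ≤ (b:ℚ) := by exact_mod_cast hb b (by simp)
      linarith

lemma hj_unique : ∀ (m : ℕ) (l : List ℤ), l ≠ [] → (∀ b ∈ l, (2:ℤ) ≤ b) →
    hjValue (l.map (fun b => (b:ℚ))) = (2*m+3)/(2*m+1) →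
    l = List.replicate m 2 ++ [3] := by
  intro m
  induction m with
  | zero =>
      rintro (_ | ⟨b, (_ | ⟨c, l⟩)⟩) hne hb hv
      · exact absurd rfl hne
      · rw [hjValue_singleton] at hv
        norm_num at hv
        have : b = 3 := by exact_mod_cast hv
        simp [this]
      · exfalso
        have ht := hj_gt_one (c :: l) (by simp)
          (fun x hx => hb x (by simp only [List.mem_cons] at hx ⊢; tauto))
        rw [hjValue_cons_tail] at hv
        set t := hjValue ((c :: l).map (fun x => (x:ℚ))) with hT
        norm_num at hv
        have h1 : 0 < 1/t := by positivity
        have h2 : 1/t < 1 := by rw [div_lt_one (by linarith)]; linarith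
        rw [one_div] at h1 h2
        have hb3 : (3:ℚ) < (b:ℚ) := by linarith
        have hb4 : (b:ℚ) < 4 := by linarith
        have h5 : (3:ℤ) < b := by exact_mod_cast hb3
        have h6 : b < 4 := by exact_mod_cast hb4
        omega
  | succ n ih =>
      rintro (_ | ⟨b, (_ | ⟨c, l⟩)⟩) hne hb hv
      · exact absurd rfl hne
      · exfalso
        rw [hjValue_singleton] at hv
        have hb2 : (2:ℚ) ≤ (b:ℚ) := by exact_mod_cast hb b (by simp)
        have hpos : (0:ℚ) < 2*((n:ℚ)+1)+1 := by positivity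
        rw [hv] at hb2
        push_cast at hb2
        rw [le_div_iff₀ hpos] at hb2
        nlinarith
      · have ht := hj_gt_one (c :: l) (by simp)
          (fun x hx => hb x (by simp only [List.mem_cons] at hx ⊢; tauto))
        rw [hjValue_cons_tail] at hv
        set t := hjValue ((c :: l).map (fun x => (x:ℚ))) with hT
        have h1 : 0 < 1/t := by positivity
        have h2 : 1/t < 1 := by rw [div_lt_one (by linarith)]; linarith
        have hpos : (0:ℚ) < 2*((n:ℚ)+1)+1 := by positivity
        push_cast at hv
        have hvlt : (2*((n:ℚ)+1)+3)/(2*((n:ℚ)+1)+1) < 2 := by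
          rw [div_lt_iff₀ hpos]; nlinarith
        have hb2 : (2:ℚ) ≤ (b:ℚ) := by exact_mod_cast hb b (by simp)
        have hblt : (b:ℚ) < 3 := by nlinarith
        have hbe : b = 2 := by
          have h3 : b < 3 := by exact_mod_cast hblt
          have h4 : (2:ℤ) ≤ b := hb b (by simp)
          omega
        subst hbe
        have htne : t ≠ 0 := by linarith
        have htv : t = (2*(n:ℚ)+3)/(2*(n:ℚ)+1) := by
          have hpos' : (0:ℚ) < 2*(n:ℚ)+1 := by positivity
          field_simp at hv ⊢

          push_cast at hv
          nlinarith [hv]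
        have := ih (c :: l) (by simp)
          (fun x hx => hb x (by simp only [List.mem_cons] at hx ⊢; tauto))
          (by rw [← hT, htv])
        rw [List.replicate_succ, List.cons_append]
        exact congrArg (List.cons 2) this

/-- If `b₁, …, b_r` are integers `≥ 2` whose Hirzebruch–Jung continued fraction value is
`4d / (2d - 1)` for a positive integer `d`, then `[b₁, …, b_r] = S_d`; in particular
`r = max d 1 = d`. -/
theorem indexTwo_TString_classification (l : List ℤ) (hl : l ≠ [])
    (hb : ∀ b ∈ l, (2 : ℤ) ≤ b) (d : ℕ) (hd : 1 ≤ d)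
    (hv : hjValue (l.map (fun b => (b : ℚ))) = (4 * d) / (2 * d - 1)) :
    l = indexTwoTStringZ d ∧ l.length = max d 1 ∧ l.length = d := by
  rcases eq_or_lt_of_le hd with h1 | h2
  · -- d = 1
    subst h1
    have hv4 : hjValue (l.map (fun b => (b : ℚ))) = 4 := by rw [hv]; norm_num
    have hl4 : l = [4] := by
      match l, hl with
      | [b], _ =>
        rw [hjValue_singleton] at hv4
        have : b = 4 := by exact_mod_cast hv4
        rw [this]
      | b :: c :: l', _ =>
        exfalso
        have ht := hj_gt_one (c :: l') (by simp)
          (fun x hx => hb x (by simp only [List.mem_cons] at hx ⊢; tauto))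
        rw [hjValue_cons_tail] at hv4
        set t := hjValue ((c :: l').map (fun x => (x:ℚ))) with hT
        have h1 : 0 < 1/t := by positivity
        have h2 : 1/t < 1 := by rw [div_lt_one (by linarith)]; linarith
        have hb3 : (4:ℚ) < (b:ℚ) := by linarith
        have hb4 : (b:ℚ) < 5 := by linarith
        have h5 : (4:ℤ) < b := by exact_mod_cast hb3
        have h6 : b < 5 := by exact_mod_cast hb4
        omega
    refine ⟨by rw [hl4]; rfl, by rw [hl4]; rfl, by rw [hl4]; rfl⟩
  · -- d ≥ 2
    have hd2 : 2 ≤ d := h2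
    have hdq : (2:ℚ) ≤ (d:ℚ) := by exact_mod_cast hd2
    have hden : (0:ℚ) < 2*(d:ℚ) - 1 := by linarith
    have hvgt : (2:ℚ) < (4*(d:ℚ))/(2*(d:ℚ)-1) := by
      rw [lt_div_iff₀ hden]; linarith
    have hvlt : (4*(d:ℚ))/(2*(d:ℚ)-1) < 3 := by
      rw [div_lt_iff₀ hden]; linarith
    have hl3 : l = 3 :: (List.replicate (d - 2) 2 ++ [3]) := by
      match l, hl with
      | [b], _ =>
        exfalso
        rw [hjValue_singleton] at hv
        rw [← hv] at hvgt hvlt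
        have h5 : (2:ℤ) < b := by exact_mod_cast hvgt
        have h6 : b < 3 := by exact_mod_cast hvlt
        omega
      | b :: c :: l', _ =>
        have ht := hj_gt_one (c :: l') (by simp)
          (fun x hx => hb x (by simp only [List.mem_cons] at hx ⊢; tauto))
        rw [hjValue_cons_tail] at hv
        set t := hjValue ((c :: l').map (fun x => (x:ℚ))) with hT
        have h1 : 0 < 1/t := by positivity
        have h2' : 1/t < 1 := by rw [div_lt_one (by linarith)]; linarith
        have hb3 : (2:ℚ) < (b:ℚ) := by linarith
        have hb4 : (b:ℚ) < 4 := by linarith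
        have h5 : (2:ℤ) < b := by exact_mod_cast hb3
        have h6 : b < 4 := by exact_mod_cast hb4
        have hbe : b = 3 := by omega
        subst hbe
        have htne : t ≠ 0 := by linarith
        have hmq : ((d - 2 : ℕ) : ℚ) = (d:ℚ) - 2 := by
          push_cast [Nat.cast_sub hd2]; ring
        have htv : t = (2*((d-2:ℕ):ℚ)+3)/(2*((d-2:ℕ):ℚ)+1) := by
          rw [hmq]
          have hden2 : (2:ℚ)*(d:ℚ) - 3 ≠ 0 := by
            intro h
            have : (d:ℚ) = 3/2 := by linarith
            rw [this] at hdq; norm_num at hdq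
          field_simp at hv
          rw [eq_div_iff (by intro h; apply hden2; linarith)]
          have hd' : (d:ℚ)*2 - 1 ≠ 0 := ne_of_gt (by linarith)
          rw [eq_div_iff hd'] at hv
          push_cast at hv
          linear_combination hv
        have := hj_unique (d-2) (c :: l') (by simp)
          (fun x hx => hb x (by simp only [List.mem_cons] at hx ⊢; tauto))
          (by rw [← hT, htv])
        rw [this]
    have hne1 : d ≠ 1 := by omega
    refine ⟨by rw [hl3, indexTwoTStringZ, if_neg hne1], ?_, ?_⟩
    · rw [hl3]; simp [List.length_replicate]; omega
    · rw [hl3]; simp [List.length_replicate]; omega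
end
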